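/- For a quaternion Hermitian matrix A ∈ ℍ^{m×m} with unitary diagonalization A = U diag(λ₁,…,λ_m) U* and λ₁ ≥ … ≥ λ_m real, and for any k orthonormal vectors x⁽¹⁾,…,x⁽ᵏ⁾ ∈ ℍ^m (with respect to the quaternionic inner product ⟨u,v⟩ = Σ conj(vᵢ)uᵢ), one has Σⱼ (x⁽ʲ⁾)* A x⁽ʲ⁾ ≤ λ₁ + … + λ_k, with equality achieved by the first k columns of U. -/

import Mathlib

open Finset Quaternion Matrix

private lemma quat_coe_sum {ι : Type*} [DecidableEq ι] (s : Finset ι) (f : ι → ℝ) :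
    ((∑ i ∈ s, f i : ℝ) : ℍ[ℝ]) = ∑ i ∈ s, ((f i : ℝ) : ℍ[ℝ]) := by
  induction s using Finset.induction with
  | empty => simp
  | insert _ _ h ih => simp [Finset.sum_insert h, ih]

private lemma sum_filter_lt_eq (m k : ℕ) (hk : k ≤ m) (f : Fin m → ℝ) :
    ∑ i ∈ univ.filter (fun i : Fin m => (i : ℕ) < k), f i
      = ∑ j : Fin k, f (Fin.castLE hk j) := by
  refine (Finset.sum_bij (fun (j : Fin k) _ => Fin.castLE hk j) ?_ ?_ ?_ ?_).symm
  · intro j _; simp [Fin.castLE]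
  · intro a _ b _ h; exact Fin.castLE_injective hk h
  · intro b hb
    simp only [mem_filter, mem_univ, true_and] at hb
    exact ⟨⟨b.1, hb⟩, Finset.mem_univ _, by ext; simp⟩
  · intro j _; rfl

private lemma rearrange_bound (m k : ℕ) (hk : k ≤ m) (lam c : Fin m → ℝ)
    (hlam : ∀ i j : Fin m, i ≤ j → lam j ≤ lam i)
    (hc0 : ∀ i, 0 ≤ c i) (hc1 : ∀ i, c i ≤ 1) (hck : ∑ i, c i = (k : ℝ)) :
    ∑ i, lam i * c i ≤ ∑ i ∈ univ.filter (fun i : Fin m => (i : ℕ) < k), lam i := by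
  rcases Nat.eq_zero_or_pos k with hk0 | hk0
  · subst hk0
    have hzero : ∀ i ∈ (univ : Finset (Fin m)), c i = 0 := by
      rw [← Finset.sum_eq_zero_iff_of_nonneg (fun i _ => hc0 i)]
      simpa using hck
    have : ∑ i, lam i * c i = 0 :=
      Finset.sum_eq_zero fun i hi => by rw [hzero i hi, mul_zero]
    rw [this]
    simp
  · have hkm : k - 1 < m := by omega
    set t := lam ⟨k - 1, hkm⟩ with ht
    have step : ∑ i, lam i * c i
        ≤ ∑ i : Fin m, (t * c i + if (i : ℕ) < k then lam i - t else 0) := by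
      refine Finset.sum_le_sum fun i _ => ?_
      by_cases h : (i : ℕ) < k
      · simp only [h, if_pos]
        have hti : t ≤ lam i := hlam i ⟨k - 1, hkm⟩ (by simp [Fin.le_def]; omega)
        nlinarith [hc1 i]
      · simp only [h, if_neg, not_false_iff, add_zero]
        have hti : lam i ≤ t := hlam ⟨k - 1, hkm⟩ i (by simp [Fin.le_def]; omega)
        nlinarith [hc0 i]
    refine step.trans (le_of_eq ?_)
    rw [Finset.sum_add_distrib, ← Finset.mul_sum, hck, ← Finset.sum_filter,
      sum_filter_lt_eq m k hk, sum_filter_lt_eq m k hk lam, Finset.sum_sub_distrib,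
      Finset.sum_const, Finset.card_univ, Fintype.card_fin]
    ring

/-- Ky Fan-type maximum principle for Hermitian quaternion matrices:
for any `k` orthonormal vectors `x⁽ʲ⁾`, `∑ⱼ (x⁽ʲ⁾)* A x⁽ʲ⁾ ≤ λ₁ + ⋯ + λ_k`,
with equality attained at the first `k` columns of the diagonalizing unitary `U`. -/
theorem quaternion_kyfan_principle (m k : ℕ) (hk : k ≤ m)
    (A U : Matrix (Fin m) (Fin m) ℍ[ℝ]) (lam : Fin m → ℝ)
    (hU : Uᴴ * U = 1 ∧ U * Uᴴ = 1)
    (hlam : ∀ i j : Fin m, i ≤ j → lam j ≤ lam i)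
    (hdiag : A = U * Matrix.diagonal (fun i => (lam i : ℍ[ℝ])) * Uᴴ)
    (x : Fin k → Fin m → ℍ[ℝ])
    (hortho : ∀ i j : Fin k, star (x j) ⬝ᵥ x i = if i = j then 1 else 0) :
    (∑ j : Fin k, (star (x j) ⬝ᵥ A.mulVec (x j)).re ≤
      ∑ i ∈ univ.filter (fun i : Fin m => (i : ℕ) < k), lam i) ∧
    (∑ j : Fin k,
        (star (fun l => U l (Fin.castLE hk j)) ⬝ᵥ A.mulVec (fun l => U l (Fin.castLE hk j))).re =
      ∑ i ∈ univ.filter (fun i : Fin m => (i : ℕ) < k), lam i) := by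
  -- transformed vectors
  set y : Fin k → Fin m → ℍ[ℝ] := fun j => Uᴴ *ᵥ x j with hy
  have hyortho : ∀ i j : Fin k, star (y j) ⬝ᵥ y i = if i = j then 1 else 0 := by
    intro i j
    rw [hy]
    simp only
    rw [star_mulVec, conjTranspose_conjTranspose, ← dotProduct_mulVec,
      mulVec_mulVec, hU.2, one_mulVec]
    exact hortho i j
  -- quadratic form in terms of y
  have hquad : ∀ j : Fin k, star (x j) ⬝ᵥ A.mulVec (x j)
      = ∑ i : Fin m, ((lam i * normSq (y j i) : ℝ) : ℍ[ℝ]) := by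
    intro j
    rw [hdiag, ← mulVec_mulVec, ← mulVec_mulVec, dotProduct_mulVec]
    have hst : star (x j) ᵥ* U = star (y j) := by
      rw [hy]; simp only
      rw [star_mulVec, conjTranspose_conjTranspose]
    rw [hst]
    simp only [dotProduct, mulVec_diagonal]
    refine Finset.sum_congr rfl fun i _ => ?_
    show star (y j i) * (((lam i : ℝ) : ℍ[ℝ]) * y j i) = _
    rw [coe_commutes, ← mul_assoc, star_mul_self, ← Quaternion.coe_mul,
      mul_comm (normSq (y j i))]
  -- norms of the y's
  have hynorm : ∀ j : Fin k, ∑ i : Fin m, normSq (y j i) = 1 := by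
    intro j
    have h1 := hyortho j j
    rw [if_pos rfl] at h1
    have h2 : star (y j) ⬝ᵥ y j = ((∑ i : Fin m, normSq (y j i) : ℝ) : ℍ[ℝ]) := by
      rw [dotProduct, quat_coe_sum]
      exact Finset.sum_congr rfl fun i _ => by
        rw [Pi.star_apply, star_mul_self]
    rw [h2] at h1
    exact Quaternion.coe_injective (by simpa using h1)
  -- mass function
  set c : Fin m → ℝ := fun i => ∑ j : Fin k, normSq (y j i) with hc
  have hc0 : ∀ i, 0 ≤ c i := fun i =>
    Finset.sum_nonneg fun j _ => normSq_nonneg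
  have hck : ∑ i, c i = (k : ℝ) := by
    rw [hc]
    simp only
    rw [Finset.sum_comm]
    simp [hynorm]
  -- c i ≤ 1 via projection argument
  have hc1 : ∀ i, c i ≤ 1 := by
    intro i
    set M : Matrix (Fin m) (Fin k) ℍ[ℝ] := Matrix.of fun l j => y j l with hM
    have hMM : Mᴴ * M = 1 := by
      refine Matrix.ext fun a b => ?_
      have h := hyortho b a
      simp only [dotProduct, Pi.star_apply] at h
      simp only [Matrix.mul_apply, conjTranspose_apply, hM, Matrix.of_apply,
        Matrix.one_apply]
      rw [h]
      by_cases h' : a = b <;> simp [h', eq_comm]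
    set P : Matrix (Fin m) (Fin m) ℍ[ℝ] := M * Mᴴ with hP
    have hPsq : P * P = P := by
      rw [hP, Matrix.mul_assoc, ← Matrix.mul_assoc Mᴴ, hMM, Matrix.one_mul]
    have hPherm : Pᴴ = P := by
      rw [hP, conjTranspose_mul, conjTranspose_conjTranspose]
    have hPdiag : ∀ l, P l l = ((∑ j : Fin k, normSq (y j l) : ℝ) : ℍ[ℝ]) := by
      intro l
      rw [hP]
      simp only [Matrix.mul_apply, conjTranspose_apply, hM, Matrix.of_apply]
      rw [quat_coe_sum]
      exact Finset.sum_congr rfl fun j _ => by rw [self_mul_star]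
    have hPii : P i i = ((c i : ℝ) : ℍ[ℝ]) := by rw [hPdiag i]
    have hstar : ∀ l, P l i = star (P i l) := by
      intro l
      conv_lhs => rw [← hPherm]
      simp [conjTranspose_apply]
    have hsum : P i i = ((∑ l : Fin m, normSq (P i l) : ℝ) : ℍ[ℝ]) := by
      conv_lhs => rw [← hPsq]
      rw [Matrix.mul_apply, quat_coe_sum]
      exact Finset.sum_congr rfl fun l _ => by rw [hstar l, self_mul_star]
    have hreal : c i = ∑ l : Fin m, normSq (P i l) := by
      apply Quaternion.coe_injective
      rw [← hPii, hsum]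
    have hii : normSq (P i i) = c i ^ 2 := by rw [hPii, normSq_coe]
    have hle : normSq (P i i) ≤ ∑ l : Fin m, normSq (P i l) :=
      Finset.single_le_sum (f := fun l => normSq (P i l))
        (fun l _ => normSq_nonneg) (Finset.mem_univ i)
    rw [hii, ← hreal] at hle
    nlinarith [hc0 i]
  -- the inequality
  have hineq : ∑ j : Fin k, (star (x j) ⬝ᵥ A.mulVec (x j)).re
      ≤ ∑ i ∈ univ.filter (fun i : Fin m => (i : ℕ) < k), lam i := by
    have hre : ∀ j, (star (x j) ⬝ᵥ A.mulVec (x j)).re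
        = ∑ i : Fin m, lam i * normSq (y j i) := by
      intro j
      rw [hquad j, ← quat_coe_sum, Quaternion.re_coe]
    calc ∑ j : Fin k, (star (x j) ⬝ᵥ A.mulVec (x j)).re
        = ∑ j : Fin k, ∑ i : Fin m, lam i * normSq (y j i) :=
          Finset.sum_congr rfl fun j _ => hre j
      _ = ∑ i : Fin m, lam i * c i := by
          rw [Finset.sum_comm]
          exact Finset.sum_congr rfl fun i _ => by rw [Finset.mul_sum]
      _ ≤ _ := rearrange_bound m k hk lam c hlam hc0 hc1 hck
  refine ⟨hineq, ?_⟩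
  -- equality part
  have hUAU : Uᴴ * A * U = Matrix.diagonal (fun i => (lam i : ℍ[ℝ])) := by
    rw [hdiag]
    simp only [Matrix.mul_assoc]
    rw [hU.1, Matrix.mul_one, ← Matrix.mul_assoc, hU.1, Matrix.one_mul]
  have hcol : ∀ j : Fin k,
      (star (fun l => U l (Fin.castLE hk j)) ⬝ᵥ
        A.mulVec (fun l => U l (Fin.castLE hk j))) = ((lam (Fin.castLE hk j) : ℝ) : ℍ[ℝ]) := by
    intro j
    set j' := Fin.castLE hk j with hj'
    have key : (star (fun l => U l j') ⬝ᵥ A.mulVec (fun l => U l j'))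
        = (Uᴴ * A * U) j' j' := by
      simp only [dotProduct, Matrix.mulVec, Matrix.mul_apply, conjTranspose_apply,
        dotProduct, Pi.star_apply, Finset.mul_sum, Finset.sum_mul, mul_assoc]
      rw [Finset.sum_comm]
    rw [key, hUAU, Matrix.diagonal_apply_eq]
  have hcolre : ∀ j : Fin k,
      (star (fun l => U l (Fin.castLE hk j)) ⬝ᵥ
        A.mulVec (fun l => U l (Fin.castLE hk j))).re = lam (Fin.castLE hk j) := by
    intro j; rw [hcol j, Quaternion.re_coe]
  rw [Finset.sum_congr rfl fun j _ => hcolre j, sum_filter_lt_eq m k hk lam]
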